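/- arXiv:1812.09190 — 4 statements merged into one kernel-verified Lean document; each statement's English description precedes it below -/
import Mathlib

section
/- Let L be a complete lattice with base S, and let ◁ be the induced basic cover (a ◁ U iff a ≤ ⋁U). Then the map sending the class [U] ∈ P(S)/=◁ to ⋁U ∈ L is a well-defined order isomorphism between the quotient suplattice P(S)/=◁ and L. -/
/-- For a complete lattice `L` with base `S` and the induced basic cover `a ◁ U ↔ a ≤ ⋁U`,
the map `[U] ↦ ⋁U` is a well-defined order isomorphism from `P(S)/=◁` onto `L`:
`U =◁ V` iff `⋁U = ⋁V` (well-definedness and injectivity), the induced order corresponds to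
the order of `L`, and every `p ∈ L` is `⋁U` for some `U ⊆ S` (surjectivity). -/
theorem quotient_iso_base {L : Type*} [CompleteLattice L] (S : Set L)
    (hbase : ∀ p : L, p = sSup {a ∈ S | a ≤ p}) :
    (∀ U V : Set L, U ⊆ S → V ⊆ S →
      (((∀ u ∈ U, u ≤ sSup V) ∧ (∀ v ∈ V, v ≤ sSup U)) ↔ sSup U = sSup V)) ∧
    (∀ U V : Set L, U ⊆ S → V ⊆ S → ((∀ u ∈ U, u ≤ sSup V) ↔ sSup U ≤ sSup V)) ∧
    (∀ p : L, ∃ U, U ⊆ S ∧ sSup U = p) := by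
  refine ⟨fun U V _ _ => ⟨fun ⟨h1, h2⟩ => le_antisymm (sSup_le h1) (sSup_le h2),
    fun h => ⟨fun u hu => h ▸ le_sSup hu, fun v hv => h ▸ le_sSup hv⟩⟩,
    fun U V _ _ => ⟨sSup_le, fun h u hu => (le_sSup hu).trans h⟩,
    fun p => ⟨{a ∈ S | a ≤ p}, fun a ha => ha.1, (hbase p).symm⟩⟩
end

section
/- Let (S, ◁, ⋉) be a basic topology and let V ⊆ S. Set Z = {a ∈ S | a ⋉ V}. Then the map φ_Z : P(S)/=◁ → Prop sending [U] to the proposition 'U and Z have a common element' is well-defined (independent of the representative U) and preserves arbitrary joins. -/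
/-- For a basic topology `(S, ◁, ⋉)` and `V ⊆ S`, with `Z = {a | a ⋉ V}`, the map
`φ_Z : P(S)/=◁ → Prop`, `[U] ↦ (U ≬ Z)`, is well-defined and preserves arbitrary joins. -/
theorem positivity_overlap_suplattice_hom {S : Type} (cov pos : S → Set S → Prop)
    (covrefl : ∀ (a : S) (U : Set S), a ∈ U → cov a U)
    (covtrans : ∀ (a : S) (U V : Set S), cov a U → (∀ u ∈ U, cov u V) → cov a V)
    (pos1 : ∀ (a : S) (U : Set S), pos a U → a ∈ U)
    (pos2 : ∀ (a : S) (U V : Set S), pos a U → (∀ b, pos b U → b ∈ V) → pos a V)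
    (pos3 : ∀ (a : S) (U V : Set S), cov a U → pos a V → ∃ b ∈ U, pos b V)
    (V : Set S) :
    (∀ U U' : Set S, (∀ u ∈ U, cov u U') → (∀ u ∈ U', cov u U) →
      ((∃ x ∈ U, pos x V) ↔ ∃ x ∈ U', pos x V)) ∧
    (∀ (ι : Type) (U : ι → Set S),
      ((∃ x ∈ ⋃ i, U i, pos x V) ↔ ∃ i, ∃ x ∈ U i, pos x V)) := by
  constructor
  · intro U U' h1 h2
    constructor
    · rintro ⟨x, hx, hp⟩
      exact pos3 x U' V (h1 x hx) hp
    · rintro ⟨x, hx, hp⟩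
      exact pos3 x U V (h2 x hx) hp
  · intro ι U
    constructor
    · rintro ⟨x, hx, hp⟩
      rcases Set.mem_iUnion.mp hx with ⟨i, hi⟩
      exact ⟨i, x, hi, hp⟩
    · rintro ⟨i, x, hx, hp⟩
      exact ⟨x, Set.mem_iUnion.mpr ⟨i, hx⟩, hp⟩
end

section
/- Let C : Cᵒᵖ ⥤ Preord be a pseudofunctor-style doctrine given concretely as follows: objects of the total category are pairs (L, Φ) with L a complete lattice and Φ a sub-suplattice of the join-preserving maps L → Prop; morphisms (L, Φ) → (M, Ψ) are join-preserving maps f : M → L with {φ ∘ f | φ ∈ Φ} ⊆ Ψ. Then the binary product of (L₁, Φ₁) and (L₂, Φ₂) in this category exists and is given by (L₁ × L₂, Φ), where L₁ × L₂ has the product order and Φ = {φ : L₁ × L₂ → Prop join-preserving | φ ∘ π₁' ∈ Φ₁-condition and φ ∘ π₂' ∈ Φ₂-condition}, i.e., Φ = P(π₁)(Φ₁) ∩ P(π₂)(Φ₂) where P(πᵢ)(Φᵢ) = {φ | φ ∘ πᵢ ∈ Φᵢ} for the coprojections πᵢ : Lᵢ → L₁ × L₂ in SLᵒᵖ. -/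
/-- Binary products in `BTop` (the Grothendieck construction of the doctrine sending a
suplattice `L` to the sub-suplattices of `SL(L, Prop)`): the product of `(L₁, Φ₁)` and
`(L₂, Φ₂)` is `(L₁ × L₂, P(π₁)(Φ₁) ∩ P(π₂)(Φ₂))`, where `π₁ x = (x, ⊥)`, `π₂ y = (⊥, y)`
are the coprojections of `L₁ × L₂` in `SL`, together with these projections, and it
satisfies the expected universal property. -/
theorem btop_binary_product {L₁ L₂ : Type} [CompleteLattice L₁] [CompleteLattice L₂]
    (Φ₁ : Set (L₁ → Prop)) (Φ₂ : Set (L₂ → Prop))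
    (h₁ : ∀ φ ∈ Φ₁, ∀ A : Set L₁, φ (sSup A) ↔ ∃ a ∈ A, φ a)
    (h₂ : ∀ φ ∈ Φ₂, ∀ A : Set L₂, φ (sSup A) ↔ ∃ a ∈ A, φ a)
    (hc₁ : ∀ (ι : Type) (g : ι → L₁ → Prop), (∀ i, g i ∈ Φ₁) → (fun x => ∃ i, g i x) ∈ Φ₁)
    (hc₂ : ∀ (ι : Type) (g : ι → L₂ → Prop), (∀ i, g i ∈ Φ₂) → (fun x => ∃ i, g i x) ∈ Φ₂) :
    let π₁ : L₁ → L₁ × L₂ := fun x => (x, ⊥)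
    let π₂ : L₂ → L₁ × L₂ := fun y => (⊥, y)
    let Φ : Set (L₁ × L₂ → Prop) :=
      {φ | (∀ A : Set (L₁ × L₂), φ (sSup A) ↔ ∃ a ∈ A, φ a) ∧
           (fun x => φ (π₁ x)) ∈ Φ₁ ∧ (fun y => φ (π₂ y)) ∈ Φ₂}
    -- the projections are morphisms `(L₁ × L₂, Φ) → (Lᵢ, Φᵢ)` of `BTop`
    (∀ A : Set L₁, π₁ (sSup A) = sSup (π₁ '' A)) ∧
    (∀ A : Set L₂, π₂ (sSup A) = sSup (π₂ '' A)) ∧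
    (∀ φ ∈ Φ, (fun x => φ (π₁ x)) ∈ Φ₁) ∧
    (∀ φ ∈ Φ, (fun y => φ (π₂ y)) ∈ Φ₂) ∧
    -- universal property of the product
    (∀ (M : Type) (_ : CompleteLattice M) (Ψ : Set (M → Prop)),
      (∀ ψ ∈ Ψ, ∀ A : Set M, ψ (sSup A) ↔ ∃ a ∈ A, ψ a) →
      (∀ (ι : Type) (g : ι → M → Prop), (∀ i, g i ∈ Ψ) → (fun x => ∃ i, g i x) ∈ Ψ) →
      ∀ (g₁ : L₁ → M) (g₂ : L₂ → M),
        (∀ A : Set L₁, g₁ (sSup A) = sSup (g₁ '' A)) →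
        (∀ A : Set L₂, g₂ (sSup A) = sSup (g₂ '' A)) →
        (∀ ψ ∈ Ψ, (fun x => ψ (g₁ x)) ∈ Φ₁) →
        (∀ ψ ∈ Ψ, (fun y => ψ (g₂ y)) ∈ Φ₂) →
        ∃! h : L₁ × L₂ → M,
          (∀ A : Set (L₁ × L₂), h (sSup A) = sSup (h '' A)) ∧
          (∀ ψ ∈ Ψ, (fun a => ψ (h a)) ∈ Φ) ∧
          (∀ x, h (π₁ x) = g₁ x) ∧ (∀ y, h (π₂ y) = g₂ y)) := by

  intro π₁ π₂ Φ
  have hπ₁ : ∀ A : Set L₁, π₁ (sSup A) = sSup (π₁ '' A) := by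
    intro A
    apply le_antisymm
    · constructor
      · show sSup A ≤ (sSup (π₁ '' A)).1
        apply sSup_le
        intro x hx
        exact (le_sSup (Set.mem_image_of_mem π₁ hx)).1
      · exact bot_le
    · apply sSup_le
      rintro p ⟨x, hx, rfl⟩
      exact ⟨le_sSup hx, le_refl ⊥⟩
  have hπ₂ : ∀ A : Set L₂, π₂ (sSup A) = sSup (π₂ '' A) := by
    intro A
    apply le_antisymm
    · constructor
      · exact bot_le
      · show sSup A ≤ (sSup (π₂ '' A)).2
        apply sSup_le
        intro x hx
        exact (le_sSup (Set.mem_image_of_mem π₂ hx)).2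
    · apply sSup_le
      rintro p ⟨x, hx, rfl⟩
      exact ⟨le_refl ⊥, le_sSup hx⟩
  refine ⟨hπ₁, hπ₂, fun φ hφ => hφ.2.1, fun φ hφ => hφ.2.2, ?_⟩
  intro M _ Ψ hΨ hcΨ g₁ g₂ hg₁ hg₂ hm₁ hm₂
  have hg₁bot : g₁ ⊥ = ⊥ := by
    have := hg₁ ∅; simpa using this
  have hg₂bot : g₂ ⊥ = ⊥ := by
    have := hg₂ ∅; simpa using this
  set h : L₁ × L₂ → M := fun p => g₁ p.1 ⊔ g₂ p.2 with hh
  have hhπ₁ : ∀ x, h (π₁ x) = g₁ x := by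
    intro x; simp [hh, π₁, hg₂bot]
  have hhπ₂ : ∀ y, h (π₂ y) = g₂ y := by
    intro y; simp [hh, π₂, hg₁bot]
  have hhs : ∀ A : Set (L₁ × L₂), h (sSup A) = sSup (h '' A) := by
    intro A
    have e1 : h (sSup A) = sSup (g₁ '' (Prod.fst '' A)) ⊔ sSup (g₂ '' (Prod.snd '' A)) := by
      simp only [hh]
      rw [Prod.fst_sSup, Prod.snd_sSup, hg₁, hg₂]
    rw [e1]
    apply le_antisymm
    · apply sup_le
      · apply sSup_le
        rintro _ ⟨_, ⟨a, ha, rfl⟩, rfl⟩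
        exact le_trans le_sup_left (le_sSup ⟨a, ha, rfl⟩)
      · apply sSup_le
        rintro _ ⟨_, ⟨a, ha, rfl⟩, rfl⟩
        exact le_trans le_sup_right (le_sSup ⟨a, ha, rfl⟩)
    · apply sSup_le
      rintro _ ⟨a, ha, rfl⟩
      exact sup_le_sup (le_sSup ⟨a.1, ⟨a, ha, rfl⟩, rfl⟩) (le_sSup ⟨a.2, ⟨a, ha, rfl⟩, rfl⟩)
  refine ⟨h, ⟨hhs, ?_, hhπ₁, hhπ₂⟩, ?_⟩
  · intro ψ hψ
    refine ⟨?_, ?_, ?_⟩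
    · intro A
      show ψ (h (sSup A)) ↔ ∃ a ∈ A, ψ (h a)
      rw [hhs A, hΨ ψ hψ (h '' A)]
      constructor
      · rintro ⟨_, ⟨a, ha, rfl⟩, hb⟩; exact ⟨a, ha, hb⟩
      · rintro ⟨a, ha, hb⟩; exact ⟨h a, ⟨a, ha, rfl⟩, hb⟩
    · have : (fun x => ψ (h (π₁ x))) = fun x => ψ (g₁ x) := by
        funext x; rw [hhπ₁]
      rw [this]; exact hm₁ ψ hψ
    · have : (fun y => ψ (h (π₂ y))) = fun y => ψ (g₂ y) := by
        funext y; rw [hhπ₂]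
      rw [this]; exact hm₂ ψ hψ
  · rintro h' ⟨hs', _, hp1, hp2⟩
    funext p
    have key : p = sSup {π₁ p.1, π₂ p.2} := by
      rw [sSup_pair]
      simp [π₁, π₂, Prod.ext_iff]
    calc h' p = h' (sSup {π₁ p.1, π₂ p.2}) := by rw [← key]
      _ = sSup (h' '' {π₁ p.1, π₂ p.2}) := hs' _
      _ = sSup {g₁ p.1, g₂ p.2} := by rw [Set.image_pair, hp1, hp2]
      _ = g₁ p.1 ⊔ g₂ p.2 := sSup_pair
      _ = h p := rfl
end

section
/- Let X be a topological space and (L, Φ) a positive topology, i.e., L is a frame and Φ a sub-suplattice of join-preserving maps L → Prop. There is a bijection, natural in both arguments, between: (a) frame homomorphisms f : L → Opens(X) such that φ_C ∘ f ∈ Φ for every closed C ⊆ X (where φ_C(I) = 'C meets I'), and (b) continuous maps g : X → Pt⁺(L, Φ), where Pt⁺(L, Φ) = {p : L → Prop | p a frame homomorphism and p ∈ Φ} carries the topology whose opens are the sets {p | p(y) = True} for y ∈ L. The bijection sends f to x ↦ φ_{cl{x}} ∘ f, and g to y ↦ g⁻¹({p | p(y)}). -/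
open TopologicalSpace

/-- A frame homomorphism into `Prop`. -/
def IsFrameHomToProp {L : Type} [Order.Frame L] (p : L → Prop) : Prop :=
  p ⊤ ∧ (∀ a b : L, p (a ⊓ b) ↔ p a ∧ p b) ∧ (∀ A : Set L, p (sSup A) ↔ ∃ a ∈ A, p a)

/-- The points of the positive topology `(L, Φ)`: frame homomorphisms `L → Prop`
belonging to `Φ`. -/
def PtPlus (L : Type) [Order.Frame L] (Φ : Set (L → Prop)) : Type :=
  {p : L → Prop // IsFrameHomToProp p ∧ p ∈ Φ}

/-- `Pt⁺(L, Φ)` is topologized by the opens `{p | p y}`, `y ∈ L`. -/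
instance instTopPtPlus (L : Type) [Order.Frame L] (Φ : Set (L → Prop)) :
    TopologicalSpace (PtPlus L Φ) :=
  TopologicalSpace.generateFrom {S | ∃ y : L, S = {p : PtPlus L Φ | p.val y}}

/-- Key lemma: the closure of `{x}` meets an open set iff `x` belongs to it. -/
lemma closure_singleton_meets_iff {X : Type} [TopologicalSpace X] (U : Set X) (hU : IsOpen U)
    (x : X) : (∃ z, z ∈ closure ({x} : Set X) ∧ z ∈ U) ↔ x ∈ U := by
  constructor
  · rintro ⟨z, hz, hzU⟩
    rcases mem_closure_iff_nhds.1 hz _ (hU.mem_nhds hzU) with ⟨w, hwU, hw⟩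
    rcases Set.mem_singleton_iff.1 hw with rfl
    exact hwU
  · intro hx
    exact ⟨x, subset_closure rfl, hx⟩

/-- The hom-bijection of the adjunction `Λ ⊣ Pt⁺` between `Top` and `PTop`: morphisms
`Λ(X) → (L, Φ)` (frame homomorphisms `f : L → Opens X` with `φ_C ∘ f ∈ Φ` for all closed
`C`) correspond to continuous maps `X → Pt⁺(L, Φ)`, via `f ↦ (x ↦ φ_{cl{x}} ∘ f)` and
`g ↦ (y ↦ g⁻¹ {p | p y})`. -/
theorem lambda_ptPlus_adjunction {X : Type} [TopologicalSpace X] (L : Type) [Order.Frame L]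
    (Φ : Set (L → Prop))
    (hpres : ∀ φ ∈ Φ, ∀ A : Set L, φ (sSup A) ↔ ∃ a ∈ A, φ a)
    (hclosed : ∀ (ι : Type) (g : ι → L → Prop), (∀ i, g i ∈ Φ) →
      (fun x => ∃ i, g i x) ∈ Φ) :
    ∃ e : {f : L → Opens X //
            (f ⊤ = ⊤) ∧ (∀ a b : L, f (a ⊓ b) = f a ⊓ f b) ∧
            (∀ A : Set L, f (sSup A) = ⨆ a ∈ A, f a) ∧
            ∀ C : Set X, IsClosed C → (fun y => ∃ x, x ∈ C ∧ x ∈ f y) ∈ Φ} ≃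
          {g : X → PtPlus L Φ // Continuous g},
      (∀ f x y, ((e f).val x).val y ↔ ∃ z, z ∈ closure {x} ∧ z ∈ (f.val y : Set X)) ∧
      (∀ g y, ((e.symm g).val y : Set X) = g.val ⁻¹' {p : PtPlus L Φ | p.val y}) := by
  classical
  -- forward map
  refine ⟨⟨fun f => ⟨fun x => ⟨fun y => ∃ z, z ∈ closure ({x} : Set X) ∧ z ∈ (f.val y : Set X),
      ?_, f.2.2.2.2 (closure {x}) isClosed_closure⟩, ?_⟩,
    fun g => ⟨fun y => ⟨g.val ⁻¹' {p : PtPlus L Φ | p.val y},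
      g.2.isOpen_preimage _ (TopologicalSpace.GenerateOpen.basic _ ⟨y, rfl⟩)⟩,
      ?_, ?_, ?_, ?_⟩, ?_, ?_⟩, fun f x y => Iff.rfl, fun g y => rfl⟩
  · -- frame hom property of `x ↦ φ_{cl{x}} ∘ f`
    have key : ∀ y : L, (∃ z, z ∈ closure ({x} : Set X) ∧ z ∈ (f.val y : Set X)) ↔
        x ∈ f.val y := fun y => closure_singleton_meets_iff _ (f.val y).isOpen x
    refine ⟨(key ⊤).mpr (by rw [f.2.1]; simp), fun a b => ?_, fun A => ?_⟩
    · simp only [key]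
      rw [f.2.2.1]
      exact Iff.rfl
    · simp only [key]
      rw [f.2.2.2.1 A]
      simp [Opens.mem_iSup]
  · -- continuity
    refine continuous_generateFrom_iff.mpr ?_
    rintro S ⟨y, rfl⟩
    convert (f.val y).isOpen using 1
    ext x
    exact closure_singleton_meets_iff _ (f.val y).isOpen x
  · ext x
    simpa using ((g.val x).2.1).1
  · intro a b
    ext x
    simpa using ((g.val x).2.1).2.1 a b
  · intro A
    ext x
    simp only [Opens.coe_mk, Set.mem_preimage, Set.mem_setOf_eq, SetLike.mem_coe,
      Opens.mem_iSup]
    simpa using ((g.val x).2.1).2.2 A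
  · intro C _hC
    have := hclosed C (fun i => (g.val i.1).val) (fun i => (g.val i.1).2.2)
    convert this using 1
    funext y
    exact propext ⟨fun ⟨x, hx, h⟩ => ⟨⟨x, hx⟩, h⟩, fun ⟨⟨x, hx⟩, h⟩ => ⟨x, hx, h⟩⟩
  · -- left inverse
    intro f
    apply Subtype.ext
    funext y
    apply Opens.ext
    ext x
    exact closure_singleton_meets_iff _ (f.val y).isOpen x
  · -- right inverse
    intro g
    apply Subtype.ext
    funext x
    apply Subtype.ext
    funext y
    exact propext (closure_singleton_meets_iff _
      (g.2.isOpen_preimage _ (TopologicalSpace.GenerateOpen.basic _ ⟨y, rfl⟩)) x)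
end
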